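/- Let T > 0, φ₀ > 0, a₀ > 0, and define A(t) = 2·√(φ₀·a₀) / tanh(√(φ₀/a₀)·(T − t)) for t ∈ [0, T). Then for all t ∈ [0, T): 2·a₀/(T − t) ≤ A(t) ≤ 2·a₀/(T − t) + (2/3)·φ₀·(T − t). -/

import Mathlib

open Real

lemma aux_sinh_le (x : ℝ) (hx : 0 ≤ x) : Real.sinh x ≤ x * Real.cosh x := by
  have h : MonotoneOn (fun y : ℝ => y * Real.cosh y - Real.sinh y) (Set.Ici 0) := by
    apply monotoneOn_of_deriv_nonneg (convex_Ici 0)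
    · exact (continuous_id.mul Real.continuous_cosh).sub Real.continuous_sinh |>.continuousOn
    · intro y hy
      exact ((differentiableAt_id.mul Real.differentiable_cosh.differentiableAt).sub
        Real.differentiable_sinh.differentiableAt).differentiableWithinAt
    · intro y hy
      rw [interior_Ici, Set.mem_Ioi] at hy
      have : deriv (fun y : ℝ => y * Real.cosh y - Real.sinh y) y = y * Real.sinh y := by
        rw [deriv_fun_sub, deriv_fun_mul, Real.deriv_cosh, Real.deriv_sinh]
        · simp
        · exact differentiableAt_id
        · exact Real.differentiable_cosh.differentiableAt
        · exact differentiableAt_id.mul Real.differentiable_cosh.differentiableAt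
        · exact Real.differentiable_sinh.differentiableAt
      rw [this]
      exact mul_nonneg hy.le (Real.sinh_nonneg_iff.mpr hy.le)
  have := h (Set.self_mem_Ici) (Set.mem_Ici.mpr hx) hx
  simpa using this

lemma aux_cosh_le (x : ℝ) (hx : 0 ≤ x) :
    x * Real.cosh x ≤ (1 + x ^ 2 / 3) * Real.sinh x := by
  have h : MonotoneOn (fun y : ℝ => (1 + y ^ 2 / 3) * Real.sinh y - y * Real.cosh y)
      (Set.Ici 0) := by
    apply monotoneOn_of_deriv_nonneg (convex_Ici 0)
    · exact (((continuous_const.add ((continuous_pow 2).div_const 3)).mul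
        Real.continuous_sinh).sub (continuous_id.mul Real.continuous_cosh)).continuousOn
    · intro y hy
      exact (((differentiableAt_const _).add ((differentiableAt_pow 2).div_const 3)).mul
        Real.differentiable_sinh.differentiableAt |>.sub
        (differentiableAt_id.mul Real.differentiable_cosh.differentiableAt)).differentiableWithinAt
    · intro y hy
      rw [interior_Ici, Set.mem_Ioi] at hy
      have hd : deriv (fun y : ℝ => (1 + y ^ 2 / 3) * Real.sinh y - y * Real.cosh y) y
          = (y / 3) * (y * Real.cosh y - Real.sinh y) := by
        rw [deriv_fun_sub, deriv_fun_mul, deriv_fun_mul, Real.deriv_sinh, Real.deriv_cosh]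
        · have : deriv (fun y : ℝ => 1 + y ^ 2 / 3) y = 2 * y / 3 := by
            rw [deriv_const_add]
            rw [deriv_div_const, deriv_pow_field]
            ring
          rw [this]; simp; ring
        · exact differentiableAt_id
        · exact Real.differentiable_cosh.differentiableAt
        · exact (differentiableAt_const _).add ((differentiableAt_pow 2).div_const 3)
        · exact Real.differentiable_sinh.differentiableAt
        · exact ((differentiableAt_const _).add ((differentiableAt_pow 2).div_const 3)).mul
            Real.differentiable_sinh.differentiableAt
        · exact differentiableAt_id.mul Real.differentiable_cosh.differentiableAt
      rw [hd]
      exact mul_nonneg (by positivity) (sub_nonneg.mpr (aux_sinh_le y hy.le))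
  have := h (Set.self_mem_Ici) (Set.mem_Ici.mpr hx) hx
  simp only [Real.sinh_zero, Real.cosh_zero] at this
  nlinarith [this]

theorem linear_ansatz_A_bound (T φ₀ a₀ : ℝ) (hT : 0 < T) (hφ₀ : 0 < φ₀) (ha₀ : 0 < a₀)
    (A : ℝ → ℝ)
    (hA : ∀ t, A t = 2 * Real.sqrt (φ₀ * a₀) / Real.tanh (Real.sqrt (φ₀ / a₀) * (T - t))) :
    ∀ t, 0 ≤ t → t < T →
      2 * a₀ / (T - t) ≤ A t ∧ A t ≤ 2 * a₀ / (T - t) + (2 / 3) * φ₀ * (T - t) := by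
  intro t ht htT
  set τ := T - t with hτdef
  have hτ : 0 < τ := by simp [hτdef]; linarith
  set s := Real.sqrt (φ₀ / a₀) with hsdef
  have hs : 0 < s := Real.sqrt_pos.mpr (by positivity)
  have hs2 : s ^ 2 = φ₀ / a₀ := Real.sq_sqrt (by positivity)
  have hsqrt : Real.sqrt (φ₀ * a₀) = a₀ * s := by
    have h1 : a₀ * s = Real.sqrt (a₀ ^ 2 * (φ₀ / a₀)) := by
      rw [Real.sqrt_mul (by positivity), Real.sqrt_sq ha₀.le, hsdef]
    rw [h1]
    congr 1
    field_simp
  set x := s * τ with hxdef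
  have hx : 0 < x := mul_pos hs hτ
  have hsinh : 0 < Real.sinh x := Real.sinh_pos_iff.mpr hx
  have hcosh : 0 < Real.cosh x := Real.cosh_pos x
  have htanh : Real.tanh x = Real.sinh x / Real.cosh x := Real.tanh_eq_sinh_div_cosh x
  have htanhpos : 0 < Real.tanh x := by rw [htanh]; positivity
  have hAt : A t = 2 * (a₀ * s) * Real.cosh x / Real.sinh x := by
    rw [hA t, hsqrt, htanh]
    field_simp
  have h1 := aux_sinh_le x hx.le
  have h2 := aux_cosh_le x hx.le
  constructor
  · rw [hAt, div_le_div_iff₀ hτ hsinh]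
    -- 2*a₀*sinh x ≤ 2*(a₀*s)*cosh x * τ, since sinh x ≤ x cosh x = s τ cosh x
    calc 2 * a₀ * Real.sinh x ≤ 2 * a₀ * (x * Real.cosh x) := by nlinarith
      _ = 2 * (a₀ * s) * Real.cosh x * τ := by rw [hxdef]; ring
  · rw [hAt]
    rw [div_le_iff₀ hsinh]
    have hrhs : (2 * a₀ / τ + 2 / 3 * φ₀ * τ) * Real.sinh x
        = (2 * a₀ / τ) * ((1 + x ^ 2 / 3) * Real.sinh x) := by
      have : φ₀ = a₀ * s ^ 2 := by rw [hs2]; field_simp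
      rw [this, hxdef]
      field_simp
    rw [hrhs]
    calc 2 * (a₀ * s) * Real.cosh x = (2 * a₀ / τ) * (x * Real.cosh x) := by
          rw [hxdef]; field_simp
      _ ≤ (2 * a₀ / τ) * ((1 + x ^ 2 / 3) * Real.sinh x) := by
          apply mul_le_mul_of_nonneg_left h2 (by positivity)
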